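/- Let G be a finitely presented group such that every finitely presented group embeds into G, and let H be a finitely presented co-Hopfian group. Then G does not embed into H. -/

import Mathlib

/-- A group is finitely presented if it is isomorphic to the quotient of a free group on
finitely many generators by the normal closure of finitely many relators. -/
def IsFinitelyPresented (G : Type u) [Group G] : Prop :=
  ∃ (n : ℕ) (R : Finset (FreeGroup (Fin n))),
    Nonempty (G ≃* FreeGroup (Fin n) ⧸ Subgroup.normalClosure (R : Set (FreeGroup (Fin n))))

open scoped commutatorElement in
open Subgroup QuotientGroup FreeGroup in
/-- The product of a finitely presented group with a free group on one generator is
finitely presented. -/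
lemma IsFinitelyPresented.prod_free {K : Type u} [Group K] (hK : IsFinitelyPresented K) :
    IsFinitelyPresented (K × FreeGroup PUnit.{u+1}) := by
  obtain ⟨n, R, ⟨e⟩⟩ := hK
  classical
  set F := FreeGroup (Fin (n + 1)) with hF
  let ι : FreeGroup (Fin n) →* F := FreeGroup.lift fun i => FreeGroup.of i.castSucc
  let t : F := FreeGroup.of (Fin.last n)
  let S : Finset F :=
    R.image ι ∪ Finset.univ.image fun i : Fin n => ⁅FreeGroup.of i.castSucc, t⁆
  set NR := Subgroup.normalClosure (R : Set (FreeGroup (Fin n))) with hNR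
  set N' := Subgroup.normalClosure (S : Set F) with hN'
  -- the target of the forward map
  let T := (FreeGroup (Fin n) ⧸ NR) × FreeGroup PUnit.{u+1}
  -- forward map from the free group
  let p : F →* T := FreeGroup.lift
    (Fin.snoc (fun j : Fin n => ((QuotientGroup.mk (FreeGroup.of j) : FreeGroup (Fin n) ⧸ NR), 1))
      ((1 : FreeGroup (Fin n) ⧸ NR), FreeGroup.of PUnit.unit))
  have hp_cast : ∀ j : Fin n, p (FreeGroup.of j.castSucc) =
      ((QuotientGroup.mk (FreeGroup.of j) : FreeGroup (Fin n) ⧸ NR), 1) := by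
    intro j
    show FreeGroup.lift _ (FreeGroup.of j.castSucc) = _
    rw [FreeGroup.lift_apply_of, Fin.snoc_castSucc]
  have hp_last : p t = (1, FreeGroup.of PUnit.unit) := by
    show FreeGroup.lift _ (FreeGroup.of (Fin.last n)) = _
    rw [FreeGroup.lift_apply_of, Fin.snoc_last]
  have hpι : p.comp ι = (QuotientGroup.mk' NR).prod 1 := by
    apply FreeGroup.ext_hom
    intro j
    rw [MonoidHom.comp_apply]
    have hji : ι (FreeGroup.of j) = FreeGroup.of j.castSucc := FreeGroup.lift_apply_of
    rw [hji, hp_cast j]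
    rfl
  have hS : (S : Set F) ⊆ (p.ker : Set F) := by
    intro x hx
    simp only [SetLike.mem_coe, MonoidHom.mem_ker]
    simp only [S, Finset.coe_union, Set.mem_union, Finset.coe_image, Set.mem_image,
      Finset.mem_coe, Finset.coe_univ, Set.mem_univ, true_and] at hx
    rcases hx with ⟨r, hr, rfl⟩ | ⟨j, rfl⟩
    · have h1 : p (ι r) = ((QuotientGroup.mk' NR) r, 1) := by
        have h2 := DFunLike.congr_fun hpι r
        exact h2
      rw [h1, Prod.mk_eq_one]
      refine ⟨?_, rfl⟩
      rw [QuotientGroup.mk'_apply, QuotientGroup.eq_one_iff]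
      exact Subgroup.subset_normalClosure hr
    · rw [map_commutatorElement, commutatorElement_eq_one_iff_commute,
        hp_cast j, hp_last]
      rw [commute_iff_eq, Prod.mk_mul_mk, Prod.mk_mul_mk, one_mul, one_mul, mul_one, mul_one]
  have hN'ker : N' ≤ p.ker := Subgroup.normalClosure_le_normal hS
  -- forward map from the quotient
  let φ : (F ⧸ N') →* T := QuotientGroup.lift N' p fun x hx => hN'ker hx
  have hφmk : ∀ w : F, φ (QuotientGroup.mk w) = p w := fun w => rfl
  -- backward maps
  have hRker : NR ≤ ((QuotientGroup.mk' N').comp ι).ker := by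
    apply Subgroup.normalClosure_le_normal
    intro r hr
    simp only [SetLike.mem_coe, MonoidHom.mem_ker, MonoidHom.comp_apply,
      QuotientGroup.mk'_apply, QuotientGroup.eq_one_iff]
    apply Subgroup.subset_normalClosure
    simp only [S, Finset.coe_union, Set.mem_union, Finset.coe_image, Set.mem_image,
      Finset.mem_coe]
    exact Or.inl ⟨r, hr, rfl⟩
  let f : (FreeGroup (Fin n) ⧸ NR) →* F ⧸ N' :=
    QuotientGroup.lift NR ((QuotientGroup.mk' N').comp ι) fun x hx => hRker hx
  have hfmk : ∀ w : FreeGroup (Fin n), f (QuotientGroup.mk w) = QuotientGroup.mk (ι w) :=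
    fun w => rfl
  let g : FreeGroup PUnit.{u+1} →* F ⧸ N' := FreeGroup.lift fun _ => QuotientGroup.mk t
  -- commutation
  let m : FreeGroup (Fin n) →* F ⧸ N' := (QuotientGroup.mk' N').comp ι
  have hm : ∀ w, m w = QuotientGroup.mk (ι w) := fun w => rfl
  have hcomm_gen : ∀ w : FreeGroup (Fin n),
      Commute (m w) ((QuotientGroup.mk t : F ⧸ N')) := by
    intro w
    induction w with
    | C1 => simpa using Commute.one_left _
    | of j =>
      rw [← commutatorElement_eq_one_iff_commute]
      have h3' : ι (FreeGroup.of j) = FreeGroup.of j.castSucc := FreeGroup.lift_apply_of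
      have h3 : m (FreeGroup.of j) = QuotientGroup.mk (FreeGroup.of j.castSucc) := by
        rw [hm, h3']
      have h4 : (QuotientGroup.mk t : F ⧸ N') = QuotientGroup.mk' N' t := rfl
      show ⁅m (FreeGroup.of j), (QuotientGroup.mk t : F ⧸ N')⁆ = 1
      rw [h3, h4, ← QuotientGroup.mk'_apply, ← map_commutatorElement,
        QuotientGroup.mk'_apply, QuotientGroup.eq_one_iff]
      apply Subgroup.subset_normalClosure
      simp only [S, Finset.coe_union, Set.mem_union, Finset.coe_image, Set.mem_image,
        Finset.mem_coe, Finset.mem_univ, Finset.coe_univ, Set.mem_univ, true_and]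
      exact Or.inr ⟨j, rfl⟩
    | inv_of x hx =>
      rw [_root_.map_inv m]
      exact Commute.inv_left hx
    | mul x y hx hy =>
      rw [_root_.map_mul m]
      exact Commute.mul_left hx hy
  have hcomm : ∀ a b, Commute (f a) (g b) := by
    intro a b
    induction a using QuotientGroup.induction_on with
    | H w =>
      have hfw : f (QuotientGroup.mk w) = m w := rfl
      rw [hfw]
      induction b with
      | C1 => simpa using Commute.one_right _
      | of u =>
        have hgu : g (FreeGroup.of u) = QuotientGroup.mk t := FreeGroup.lift_apply_of
        show Commute _ (g (FreeGroup.of u))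
        rw [hgu]; exact hcomm_gen w
      | inv_of x hx =>
        rw [_root_.map_inv g]
        exact Commute.inv_right hx
      | mul x y hx hy =>
        show Commute _ (g (x * y))
        rw [_root_.map_mul g]
        exact Commute.mul_right hx hy
  let ψ : T →* F ⧸ N' := MonoidHom.noncommCoprod f g hcomm
  -- the two composites are the identity
  have hφf : φ.comp f = MonoidHom.inl _ _ := by
    apply QuotientGroup.monoidHom_ext
    apply FreeGroup.ext_hom
    intro j
    show φ (f (QuotientGroup.mk (FreeGroup.of j))) = _
    rw [hfmk, hφmk]
    have : ι (FreeGroup.of j) = FreeGroup.of j.castSucc := by simp [ι]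
    rw [this, hp_cast j]
    rfl
  have hφg : φ.comp g = MonoidHom.inr _ _ := by
    apply FreeGroup.ext_hom
    intro u
    show φ (g (FreeGroup.of u)) = _
    have : g (FreeGroup.of u) = QuotientGroup.mk t := by simp [g]
    rw [this, hφmk, hp_last]
    cases u
    rfl
  have hφψ : φ.comp ψ = MonoidHom.id T := by
    apply MonoidHom.ext
    rintro ⟨a, b⟩
    have h1 : φ (f a) = (a, 1) := DFunLike.congr_fun hφf a
    have h2 : φ (g b) = (1, b) := DFunLike.congr_fun hφg b
    show φ (ψ (a, b)) = (a, b)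
    have : ψ (a, b) = f a * g b := rfl
    show φ ((ψ.comp (MonoidHom.id T)) (a,b)) = _
    rw [MonoidHom.comp_id, this, _root_.map_mul, h1, h2, Prod.mk_mul_mk, one_mul, mul_one]
  have hψφ : ψ.comp φ = MonoidHom.id (F ⧸ N') := by
    apply QuotientGroup.monoidHom_ext
    apply FreeGroup.ext_hom
    intro j
    show ψ (φ (QuotientGroup.mk (FreeGroup.of j))) = QuotientGroup.mk (FreeGroup.of j)
    rw [hφmk]
    induction j using Fin.lastCases with
    | last =>
      rw [hp_last]
      show f 1 * g (FreeGroup.of PUnit.unit) = _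
      simp [g, t]
    | cast i =>
      rw [hp_cast i]
      show f (QuotientGroup.mk (FreeGroup.of i)) * g 1 = _
      rw [hfmk, _root_.map_one g, mul_one]
      have : ι (FreeGroup.of i) = FreeGroup.of i.castSucc := by simp [ι]
      rw [this]
  -- assemble the equivalence
  have e2 : (F ⧸ N') ≃* T := MonoidHom.toMulEquiv φ ψ hψφ hφψ
  refine ⟨n + 1, S, ⟨?_⟩⟩
  exact (MulEquiv.prodCongr e (MulEquiv.refl _)).trans e2.symm

/-- If `G` is a finitely presented group containing a copy of every finitely presented
group, and `H` is a finitely presented co-Hopfian group, then `G` does not embed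
into `H`. -/
theorem universal_fp_not_embed_coHopfian (G H : Type u) [Group G] [Group H]
    (hG : IsFinitelyPresented G)
    (huniv : ∀ (K : Type u) [Group K], IsFinitelyPresented K →
      ∃ f : K →* G, Function.Injective f)
    (hH : IsFinitelyPresented H)
    (hcoHopf : ∀ β : H →* H, Function.Injective β → Function.Surjective β) :
    ¬ ∃ f : G →* H, Function.Injective f := by
  rintro ⟨fGH, hf⟩
  obtain ⟨g, hg⟩ := huniv (H × FreeGroup PUnit.{u+1}) hH.prod_free
  let β : H →* H := (fGH.comp g).comp (MonoidHom.inl H (FreeGroup PUnit.{u+1}))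
  have hβ : Function.Injective β := by
    intro a b hab
    have : ((a, 1) : H × FreeGroup PUnit.{u+1}) = (b, 1) := hg (hf hab)
    exact (Prod.ext_iff.mp this).1
  obtain ⟨h, hh⟩ := hcoHopf β hβ (fGH (g (1, FreeGroup.of PUnit.unit)))
  have heq : ((h, 1) : H × FreeGroup PUnit.{u+1}) = (1, FreeGroup.of PUnit.unit) :=
    hg (hf hh)
  have h1 : (1 : FreeGroup PUnit.{u+1}) = FreeGroup.of PUnit.unit := (Prod.ext_iff.mp heq).2
  have := congrArg FreeGroup.toWord h1
  simp [FreeGroup.toWord_one, FreeGroup.toWord_of] at this
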